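/- If q is an odd prime power, then every arc in PG(2,q) has at most q+1 points. -/
import Mathlib


abbrev PGPoint (F : Type*) [Field F] := Projectivization F (Fin 3 → F)

abbrev PGLine (F : Type*) [Field F] :=
  {l : Submodule F (Fin 3 → F) // Module.finrank F l = 2}

def OnLine {F : Type*} [Field F] (P : PGPoint F) (l : PGLine F) : Prop :=
  P.submodule ≤ l.1

def IsArc {F : Type*} [Field F] (S : Set (PGPoint F)) : Prop :=
  ∀ a ∈ S, ∀ b ∈ S, ∀ c ∈ S, a ≠ b → a ≠ c → b ≠ c →
    ¬ ∃ l : PGLine F, OnLine a l ∧ OnLine b l ∧ OnLine c l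

def IsCompleteArc {F : Type*} [Field F] (S : Set (PGPoint F)) : Prop :=
  IsArc S ∧ ∀ T : Set (PGPoint F), IsArc T → S ⊆ T → S = T

def IsBisecant {F : Type*} [Field F] (K : Set (PGPoint F)) (l : PGLine F) : Prop :=
  Set.ncard {x ∈ K | OnLine x l} = 2

open Projectivization Module
open scoped LinearAlgebra.Projectivization

namespace ArcAux

variable {F : Type*} [Field F]

/-! ### Lines through two points -/

lemma finrank_sup_eq_two {a b : PGPoint F} (hab : a ≠ b) :
    finrank F ↥(Projectivization.submodule a ⊔ Projectivization.submodule b) = 2 := by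
  have hne : a.submodule ≠ b.submodule := fun h => hab (Projectivization.submodule_injective h)
  have h1 : finrank F a.submodule = 1 := a.finrank_submodule
  have h2 : finrank F b.submodule = 1 := b.finrank_submodule
  have hinf : a.submodule ⊓ b.submodule < a.submodule := by
    rcases lt_or_eq_of_le (inf_le_left : a.submodule ⊓ b.submodule ≤ a.submodule) with h | h
    · exact h
    · exact absurd (Submodule.eq_of_le_of_finrank_eq (h ▸ inf_le_right) (by rw [h1, h2])) hne
  have h0 : finrank F ↥(a.submodule ⊓ b.submodule) = 0 := by
    have := Submodule.finrank_lt_finrank_of_lt hinf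
    omega
  have := Submodule.finrank_sup_add_finrank_inf_eq a.submodule b.submodule
  omega

noncomputable def lineThrough (a b : PGPoint F) (hab : a ≠ b) : PGLine F :=
  ⟨a.submodule ⊔ b.submodule, finrank_sup_eq_two hab⟩

lemma onLine_lineThrough_left {a b : PGPoint F} (hab : a ≠ b) :
    OnLine a (lineThrough a b hab) := le_sup_left

lemma onLine_lineThrough_right {a b : PGPoint F} (hab : a ≠ b) :
    OnLine b (lineThrough a b hab) := le_sup_right

lemma lineThrough_unique {a b : PGPoint F} (hab : a ≠ b) {l : PGLine F}
    (ha : OnLine a l) (hb : OnLine b l) : l = lineThrough a b hab := by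
  apply Subtype.ext
  exact (Submodule.eq_of_le_of_finrank_eq (sup_le ha hb)
    (by rw [l.2]; exact (finrank_sup_eq_two hab).symm ▸ rfl)).symm

/-! ### Cardinality of projectivizations of 2-dimensional spaces -/

lemma card_proj_fin2 [Fintype F] : Nat.card (ℙ F (Fin 2 → F)) = Fintype.card F + 1 := by
  classical
  have h0 : (![0,1] : Fin 2 → F) ≠ 0 := by
    intro h; have := congrFun h 1; simp at this
  have h1 : ∀ a : F, (![1,a] : Fin 2 → F) ≠ 0 := by
    intro a h; have := congrFun h 0; simp at this
  let g : Option F → ℙ F (Fin 2 → F) :=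
    fun o => o.elim (Projectivization.mk F ![0,1] h0) (fun a => Projectivization.mk F ![1,a] (h1 a))
  have hbij : Function.Bijective g := by
    constructor
    · rintro (_|a) (_|b) hxy
      · rfl
      · exfalso
        simp only [g, Option.elim, Projectivization.mk_eq_mk_iff] at hxy
        obtain ⟨u, hu⟩ := hxy
        have := congrFun hu 0
        simp [Units.smul_def] at this
      · exfalso
        simp only [g, Option.elim, Projectivization.mk_eq_mk_iff] at hxy
        obtain ⟨u, hu⟩ := hxy
        have := congrFun hu 0
        simp [Units.smul_def] at this
      · simp only [g, Option.elim, Projectivization.mk_eq_mk_iff] at hxy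
        obtain ⟨u, hu⟩ := hxy
        have h0' := congrFun hu 0
        have h1' := congrFun hu 1
        simp [Units.smul_def] at h0' h1'
        subst h0'
        simpa using h1'.symm
    · intro p
      induction' p with v hv
      by_cases hv0 : v 0 = 0
      · have hv1 : v 1 ≠ 0 := by
          intro h; apply hv; ext i; fin_cases i <;> simp [hv0, h]
        refine ⟨none, ?_⟩
        simp only [g, Option.elim, Projectivization.mk_eq_mk_iff]
        refine ⟨Units.mk0 (v 1)⁻¹ (inv_ne_zero hv1), ?_⟩
        ext i; fin_cases i <;> simp [Units.smul_def, hv0, inv_mul_cancel₀ hv1]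
      · refine ⟨some (v 1 / v 0), ?_⟩
        simp only [g, Option.elim, Projectivization.mk_eq_mk_iff]
        refine ⟨(Units.mk0 (v 0) hv0)⁻¹, ?_⟩
        ext i; fin_cases i <;>
          simp [Units.smul_def, hv0, div_eq_mul_inv, mul_comm, mul_assoc, inv_mul_cancel₀]
  have := Nat.card_eq_of_bijective g hbij
  rw [← this, Nat.card_eq_fintype_card, Fintype.card_option]

lemma card_proj_congr {V W : Type*} [AddCommGroup V] [Module F V] [AddCommGroup W] [Module F W]
    (e : V ≃ₗ[F] W) : Nat.card (ℙ F V) = Nat.card (ℙ F W) := by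
  apply Nat.card_eq_of_bijective (Projectivization.map e.toLinearMap e.injective)
  constructor
  · exact Projectivization.map_injective _ _
  · intro p
    induction' p with w hw
    have hsw : (e.symm w : V) ≠ 0 := by
      intro h
      apply hw
      have := congrArg e h
      simpa using this
    refine ⟨Projectivization.mk F (e.symm w) hsw, ?_⟩
    rw [Projectivization.map_mk]
    rw [Projectivization.mk_eq_mk_iff]
    exact ⟨1, by simp⟩

lemma card_proj_two {V : Type*} [AddCommGroup V] [Module F V] [FiniteDimensional F V]
    [Fintype F] (h : finrank F V = 2) : Nat.card (ℙ F V) = Fintype.card F + 1 := by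
  have e : V ≃ₗ[F] (Fin 2 → F) :=
    LinearEquiv.ofFinrankEq _ _ (by rw [h, Module.finrank_fin_fun])
  rw [card_proj_congr e, card_proj_fin2]

/-! ### Counting lines through a point -/

set_option synthInstance.maxHeartbeats 1000000 in
lemma finrank_map_mkQ {W l : Submodule F (Fin 3 → F)} (hWl : W ≤ l) :
    finrank F ↥(l.map W.mkQ) + finrank F ↥W = finrank F ↥l := by
  have h1 := LinearMap.finrank_range_add_finrank_ker (W.mkQ.domRestrict l)
  rw [LinearMap.range_domRestrict] at h1
  have h2 : LinearMap.ker (W.mkQ.domRestrict l) = (Submodule.comap l.subtype W) := by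
    ext x; simp [LinearMap.mem_ker, Submodule.mem_comap]
  rw [h2] at h1
  have h3 : finrank F ↥(Submodule.comap l.subtype W) = finrank F ↥W :=
    (Submodule.comapSubtypeEquivOfLe hWl).finrank_eq
  omega

noncomputable def linesThroughEquiv (P : PGPoint F) :
    {l : PGLine F // OnLine P l} ≃
      {m : Submodule F ((Fin 3 → F) ⧸ P.submodule) // finrank F m = 1} where
  toFun l := ⟨l.1.1.map P.submodule.mkQ, by
    have := finrank_map_mkQ (l.2 : P.submodule ≤ l.1.1)
    rw [l.1.2, P.finrank_submodule] at this
    omega⟩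
  invFun m := ⟨⟨m.1.comap P.submodule.mkQ, by
      have hle : P.submodule ≤ m.1.comap P.submodule.mkQ := by
        intro x hx
        simp only [Submodule.mem_comap]
        have : P.submodule.mkQ x = 0 := by
          rw [← LinearMap.mem_ker, Submodule.ker_mkQ]; exact hx
        rw [this]; exact m.1.zero_mem
      have h1 := finrank_map_mkQ hle
      have h2 : (m.1.comap P.submodule.mkQ).map P.submodule.mkQ = m.1 := by
        rw [Submodule.map_comap_eq, Submodule.range_mkQ, top_inf_eq]
      rw [h2, m.2, P.finrank_submodule] at h1
      omega⟩, by
    intro x hx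
    simp only [Submodule.mem_comap]
    have : P.submodule.mkQ x = 0 := by
      rw [← LinearMap.mem_ker, Submodule.ker_mkQ]; exact hx
    rw [this]; exact m.1.zero_mem⟩
  left_inv l := by
    apply Subtype.ext; apply Subtype.ext
    simp only
    rw [Submodule.comap_map_eq, Submodule.ker_mkQ, sup_eq_left.mpr (l.2 : P.submodule ≤ l.1.1)]
  right_inv m := by
    apply Subtype.ext
    simp only
    rw [Submodule.map_comap_eq, Submodule.range_mkQ, top_inf_eq]

lemma card_linesThrough [Fintype F] (P : PGPoint F) :
    Nat.card {l : PGLine F // OnLine P l} = Fintype.card F + 1 := by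
  rw [Nat.card_congr (linesThroughEquiv P)]
  rw [← Nat.card_congr (Projectivization.equivSubmodule F ((Fin 3 → F) ⧸ P.submodule))]
  apply card_proj_two
  have h := Submodule.finrank_quotient_add_finrank P.submodule
  rw [P.finrank_submodule, Module.finrank_fin_fun] at h
  omega

/-! ### A third point on every line -/

lemma rep_mem_of_onLine {a : PGPoint F} {l : PGLine F} (h : OnLine a l) : a.rep ∈ l.1 := by
  apply h
  rw [Projectivization.submodule_eq]
  exact Submodule.mem_span_singleton_self _

lemma exists_third_point {a b : PGPoint F} (hab : a ≠ b) {l : PGLine F}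
    (ha : OnLine a l) (hb : OnLine b l) :
    ∃ c : PGPoint F, c ≠ a ∧ c ≠ b ∧ OnLine c l := by
  have hba : ¬ ∃ s : F, s • a.rep = b.rep := by
    rintro ⟨s, hs⟩
    apply hab.symm
    rw [← a.mk_rep, ← b.mk_rep, Projectivization.mk_eq_mk_iff']
    exact ⟨s, hs⟩
  have hab' : ¬ ∃ s : F, s • b.rep = a.rep := by
    rintro ⟨s, hs⟩
    apply hab
    rw [← a.mk_rep, ← b.mk_rep, Projectivization.mk_eq_mk_iff']
    exact ⟨s, hs⟩
  have hsum : a.rep + b.rep ≠ 0 := by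
    intro h
    exact hab' ⟨-1, by rw [neg_one_smul, neg_eq_iff_add_eq_zero, add_comm]; exact h⟩
  refine ⟨Projectivization.mk F (a.rep + b.rep) hsum, ?_, ?_, ?_⟩
  · intro h
    conv_rhs at h => rw [← Projectivization.mk_rep a]
    rw [Projectivization.mk_eq_mk_iff'] at h
    obtain ⟨s, hs⟩ := h
    exact hba ⟨s - 1, by rw [sub_smul, one_smul, hs]; ring⟩
  · intro h
    conv_rhs at h => rw [← Projectivization.mk_rep b]
    rw [Projectivization.mk_eq_mk_iff'] at h
    obtain ⟨s, hs⟩ := h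
    exact hab' ⟨s - 1, by rw [sub_smul, one_smul, hs]; ring⟩
  · show (Projectivization.mk F (a.rep + b.rep) hsum).submodule ≤ l.1
    rw [Projectivization.submodule_mk, Submodule.span_le, Set.singleton_subset_iff]
    exact Submodule.add_mem _ (rep_mem_of_onLine ha) (rep_mem_of_onLine hb)

/-! ### Parity from a fixed-point-free involution -/

lemma even_card_of_involution {α : Type*} [Finite α] (σ : α → α)
    (h2 : ∀ x, σ (σ x) = x) (h1 : ∀ x, σ x ≠ x) : Even (Nat.card α) := by
  classical
  cases nonempty_fintype α
  rw [Nat.card_eq_fintype_card, ← Finset.card_univ]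
  suffices H : ∀ (n : ℕ) (s : Finset α), s.card = n → (∀ x ∈ s, σ x ∈ s) → Even s.card from
    H _ Finset.univ rfl (by simp)
  intro n
  induction n using Nat.strong_induction_on with
  | _ n ih =>
    intro s hcard hclosed
    rcases Finset.eq_empty_or_nonempty s with rfl | ⟨x, hx⟩
    · simp
    · have hσx : σ x ∈ s.erase x := Finset.mem_erase.mpr ⟨h1 x, hclosed x hx⟩
      have hpos : 1 ≤ (s.erase x).card := Finset.card_pos.mpr ⟨σ x, hσx⟩
      have hex : (s.erase x).card = s.card - 1 := Finset.card_erase_of_mem hx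
      have hspos : 1 ≤ s.card := Finset.card_pos.mpr ⟨x, hx⟩
      set t := (s.erase x).erase (σ x) with ht
      have htc : t.card = s.card - 2 := by
        rw [ht, Finset.card_erase_of_mem hσx, hex]; omega
      have hclosed' : ∀ y ∈ t, σ y ∈ t := by
        intro y hy
        simp only [ht, Finset.mem_erase] at hy ⊢
        obtain ⟨hy1, hy2, hy3⟩ := hy
        refine ⟨?_, ?_, hclosed y hy3⟩
        · intro h; exact hy2 (by rw [← h2 y, ← h2 x, h])
        · intro h; exact hy1 (by rw [← h2 y, h])
      have hev : Even t.card := ih t.card (by omega) t rfl hclosed'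
      obtain ⟨k, hk⟩ := hev
      exact ⟨k + 1, by omega⟩

/-! ### Main argument -/

lemma main_aux [Fintype F] (q : ℕ) (hq : Fintype.card F = q) (hodd : Odd q)
    (S : Set (PGPoint F)) (hS : IsArc S) (hcard : q + 2 ≤ Nat.card S) : False := by
  classical
  have hfinP : Finite (PGPoint F) := Quotient.finite _
  have hfinSub : Finite (Submodule F (Fin 3 → F)) :=
    Finite.of_injective (fun m => (m : Set (Fin 3 → F))) SetLike.coe_injective
  have hfinL : Finite (PGLine F) := Subtype.finite
  have harc : ∀ a ∈ S, ∀ b ∈ S, ∀ c ∈ S, a ≠ b → a ≠ c → b ≠ c →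
      ∀ l : PGLine F, OnLine a l → OnLine b l → OnLine c l → False :=
    fun a ha b hb c hc h1 h2 h3 l la lb lc => hS a ha b hb c hc h1 h2 h3 ⟨l, la, lb, lc⟩
  -- the exact cardinality and surjectivity of the pencil map
  have hsurj : ∀ P ∈ S, ∀ l : PGLine F, OnLine P l → ∃ Q ∈ S, Q ≠ P ∧ OnLine Q l := by
    intro P hP l hl
    have hne : ∀ Q : ↥(S \ {P}), P ≠ Q.1 := by
      intro Q h
      exact Q.2.2 h.symm
    let f : ↥(S \ {P}) → {l' : PGLine F // OnLine P l'} := fun Q =>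
      ⟨lineThrough P Q.1 (hne Q), onLine_lineThrough_left _⟩
    have hfinj : Function.Injective f := by
      rintro Q R hQR
      by_contra hcon
      have hQR' : Q.1 ≠ R.1 := fun h => hcon (Subtype.ext h)
      have hval : lineThrough P Q.1 (hne Q) = lineThrough P R.1 (hne R) :=
        congrArg Subtype.val hQR
      have hRon : OnLine R.1 (lineThrough P Q.1 (hne Q)) := by
        rw [hval]; exact onLine_lineThrough_right _
      exact harc P hP Q.1 Q.2.1 R.1 R.2.1 (hne Q) (hne R) hQR'
        (lineThrough P Q.1 (hne Q)) (onLine_lineThrough_left _)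
        (onLine_lineThrough_right _) hRon
    have hble : Nat.card ↥(S \ {P}) ≤ Fintype.card F + 1 := by
      have := Nat.card_le_card_of_injective f hfinj
      rwa [card_linesThrough P] at this
    have hdiff : Nat.card ↥(S \ {P}) = Nat.card ↥S - 1 := by
      rw [Nat.card_coe_set_eq, Nat.card_coe_set_eq,
        Set.ncard_diff_singleton_of_mem hP]
    have hcards : Nat.card ↥(S \ {P}) = Nat.card {l' : PGLine F // OnLine P l'} := by
      rw [card_linesThrough P, hq]
      rw [hq] at hble
      rw [hdiff] at hble ⊢
      omega
    have hfbij : Function.Bijective f :=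
      (Nat.bijective_iff_injective_and_card f).mpr ⟨hfinj, hcards⟩
    obtain ⟨Q, hQ⟩ := hfbij.2 ⟨l, hl⟩
    refine ⟨Q.1, Q.2.1, fun h => (hne Q) h.symm, ?_⟩
    have hval : lineThrough P Q.1 (hne Q) = l := congrArg Subtype.val hQ
    rw [← hval]
    exact onLine_lineThrough_right _
  -- exact cardinality of S
  have hSnon : S.Nonempty := by
    rw [Set.nonempty_iff_ne_empty]
    intro h
    rw [h] at hcard
    simp at hcard
  have hScard : Nat.card ↥S = q + 2 := by
    obtain ⟨P, hP⟩ := hSnon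
    have hne : ∀ Q : ↥(S \ {P}), P ≠ Q.1 := by
      intro Q h
      exact Q.2.2 h.symm
    let f : ↥(S \ {P}) → {l' : PGLine F // OnLine P l'} := fun Q =>
      ⟨lineThrough P Q.1 (hne Q), onLine_lineThrough_left _⟩
    have hfinj : Function.Injective f := by
      rintro Q R hQR
      by_contra hcon
      have hQR' : Q.1 ≠ R.1 := fun h => hcon (Subtype.ext h)
      have hval : lineThrough P Q.1 (hne Q) = lineThrough P R.1 (hne R) :=
        congrArg Subtype.val hQR
      have hRon : OnLine R.1 (lineThrough P Q.1 (hne Q)) := by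
        rw [hval]; exact onLine_lineThrough_right _
      exact harc P hP Q.1 Q.2.1 R.1 R.2.1 (hne Q) (hne R) hQR'
        (lineThrough P Q.1 (hne Q)) (onLine_lineThrough_left _)
        (onLine_lineThrough_right _) hRon
    have hble : Nat.card ↥(S \ {P}) ≤ Fintype.card F + 1 := by
      have := Nat.card_le_card_of_injective f hfinj
      rwa [card_linesThrough P] at this
    have hdiff : Nat.card ↥(S \ {P}) = Nat.card ↥S - 1 := by
      rw [Nat.card_coe_set_eq, Nat.card_coe_set_eq,
        Set.ncard_diff_singleton_of_mem hP]
    rw [hq, hdiff] at hble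
    omega
  -- find an external point N
  obtain ⟨a, ha, b, hb, hab⟩ : ∃ a ∈ S, ∃ b ∈ S, a ≠ b := by
    have h1 : 1 < S.ncard := by
      rw [← Nat.card_coe_set_eq]
      omega
    obtain ⟨x, y, hx, hy, hxy⟩ := (Set.one_lt_ncard_iff (Set.toFinite S)).mp h1
    exact ⟨x, hx, y, hy, hxy⟩
  obtain ⟨N, hNa, hNb, hNl⟩ := exists_third_point hab
    (onLine_lineThrough_left hab) (onLine_lineThrough_right hab)
  have hN : N ∉ S := fun hNS =>
    harc a ha b hb N hNS hab (Ne.symm hNa) (Ne.symm hNb) (lineThrough a b hab)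
      (onLine_lineThrough_left _) (onLine_lineThrough_right _) hNl
  have hNQ : ∀ Q : ↥S, N ≠ Q.1 := fun Q h => hN (h ▸ Q.2)
  -- the pairing involution
  have key : ∀ Q : ↥S, ∃ Q' : ↥S, Q' ≠ Q ∧ OnLine Q'.1 (lineThrough N Q.1 (hNQ Q)) ∧
      ∀ R : ↥S, OnLine R.1 (lineThrough N Q.1 (hNQ Q)) → R = Q ∨ R = Q' := by
    intro Q
    obtain ⟨Q', hQ'S, hQ'ne, hQ'l⟩ := hsurj Q.1 Q.2 (lineThrough N Q.1 (hNQ Q))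
      (onLine_lineThrough_right _)
    refine ⟨⟨Q', hQ'S⟩, fun h => hQ'ne (congrArg Subtype.val h), hQ'l, ?_⟩
    intro R hR
    by_contra hcontra
    push_neg at hcontra
    obtain ⟨hR1, hR2⟩ := hcontra
    exact harc Q.1 Q.2 Q' hQ'S R.1 R.2 (Ne.symm hQ'ne)
      (fun h => hR1 (Subtype.ext h.symm)) (fun h => hR2 (Subtype.ext h.symm))
      (lineThrough N Q.1 (hNQ Q)) (onLine_lineThrough_right _) hQ'l hR
  choose σ hσne hσon hσuniq using key
  have hinv : ∀ Q, σ (σ Q) = Q := by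
    intro Q
    have hline : lineThrough N (σ Q).1 (hNQ (σ Q)) = lineThrough N Q.1 (hNQ Q) := by
      symm
      exact lineThrough_unique (hNQ (σ Q)) (onLine_lineThrough_left _) (hσon Q)
    have h1 : OnLine (σ (σ Q)).1 (lineThrough N Q.1 (hNQ Q)) := hline ▸ hσon (σ Q)
    rcases hσuniq Q (σ (σ Q)) h1 with h | h
    · exact h
    · exact absurd h (hσne (σ Q))
  have heven : Even (Nat.card ↥S) := even_card_of_involution σ hinv hσne
  rw [hScard] at heven
  obtain ⟨k, hk⟩ := heven
  obtain ⟨m, hm⟩ := hodd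
  omega

end ArcAux

theorem stmt1 {F : Type*} [Field F] [Fintype F] (q : ℕ) (hq : Fintype.card F = q)
    (hodd : Odd q) (S : Set (PGPoint F)) (hS : IsArc S) : Nat.card S ≤ q + 1 := by
  by_contra hcon
  push_neg at hcon
  exact ArcAux.main_aux q hq hodd S hS (by omega)
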